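/- arXiv:2102.02521 — 4 statements merged into one kernel-verified Lean document; each statement's English description precedes it below -/
import Mathlib

section
/- For every s ∈ (0,1) and every γ > 0, the smoothed von Mises resolvent R_s is Lipschitz continuous with constant 1, i.e. |R_s(τ) − R_s(σ)| ≤ |τ − σ| for all σ, τ ∈ ℝ^{d×d}_s. -/
open scoped Classical

/-- The Frobenius inner product `σ : τ = trace (σ τ)` on (symmetric) matrices. -/
noncomputable def frob {d : ℕ} (A B : Matrix (Fin d) (Fin d) ℝ) : ℝ :=
  Matrix.trace (A * B)

/-- The norm induced by the Frobenius inner product (on symmetric matrices). -/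
noncomputable def fnorm {d : ℕ} (A : Matrix (Fin d) (Fin d) ℝ) : ℝ :=
  Real.sqrt (frob A A)

/-- The deviator `τ^D = τ - (trace τ / d) • I`. -/
noncomputable def dev {d : ℕ} (A : Matrix (Fin d) (Fin d) ℝ) : Matrix (Fin d) (Fin d) ℝ :=
  A - (Matrix.trace A / (d : ℝ)) • (1 : Matrix (Fin d) (Fin d) ℝ)

/-- The smoothed max function `max_s`. -/
noncomputable def maxs (s r : ℝ) : ℝ :=
  if s ≤ |r| then max 0 r else (r + s) ^ 2 / (4 * s)

/-- The smoothed von Mises resolvent `R_s`. -/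
noncomputable def Rs {d : ℕ} (s γ : ℝ) (τ : Matrix (Fin d) (Fin d) ℝ) :
    Matrix (Fin d) (Fin d) ℝ :=
  if dev τ = 0 then τ else τ - maxs s (1 - γ / fnorm (dev τ)) • dev τ



lemma maxs_nonneg {s : ℝ} (hs : 0 < s) (r : ℝ) : 0 ≤ maxs s r := by
  unfold maxs
  split
  · exact le_max_left 0 r
  · positivity

lemma maxs_le_one {s : ℝ} (hs : 0 < s) (hs1 : s < 1) {r : ℝ} (hr : r ≤ 1) :
    maxs s r ≤ 1 := by
  unfold maxs
  split_ifs with h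
  · exact max_le (by norm_num) hr
  · obtain ⟨h1, h2⟩ := abs_lt.mp (not_le.mp h)
    rw [div_le_one (by positivity)]
    nlinarith [mul_pos (show (0:ℝ) < s - r by linarith) (show (0:ℝ) < 3*s + r by linarith),
      mul_nonneg hs.le (show (0:ℝ) ≤ 1 - s by linarith)]

lemma maxs_mono {s : ℝ} (hs : 0 < s) (hs1 : s < 1) {u v : ℝ} (huv : u ≤ v) :
    maxs s u ≤ maxs s v := by
  unfold maxs
  split_ifs with h1 h2 h2
  · exact max_le_max le_rfl huv
  · obtain ⟨hv1, hv2⟩ := abs_lt.mp (not_le.mp h2)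
    have hu : u ≤ -s := by
      rcases le_abs.mp h1 with h | h
      · linarith
      · linarith
    rw [max_eq_left (by linarith)]
    positivity
  · obtain ⟨hu1, hu2⟩ := abs_lt.mp (not_le.mp h1)
    have hv : s ≤ v := by
      rcases le_abs.mp h2 with h | h
      · exact h
      · linarith
    rw [max_eq_right (by linarith)]
    rw [div_le_iff₀ (by positivity)]
    nlinarith [mul_pos (show (0:ℝ) < s - u by linarith) (show (0:ℝ) < 3*s + u by linarith)]
  · obtain ⟨hu1, hu2⟩ := abs_lt.mp (not_le.mp h1)
    obtain ⟨hv1, hv2⟩ := abs_lt.mp (not_le.mp h2)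
    have : (u + s)^2 ≤ (v + s)^2 := by nlinarith
    exact div_le_div_of_nonneg_right this (by positivity)

lemma g_mono {s u v : ℝ} (hs : 0 < s) (hs1 : s < 1) (huv : u ≤ v) (hv : v < 1) :
    (1 - maxs s u) / (1 - u) ≤ (1 - maxs s v) / (1 - v) := by
  have hu : u < 1 := lt_of_le_of_lt huv hv
  have h1u : (0:ℝ) < 1 - u := by linarith
  have h1v : (0:ℝ) < 1 - v := by linarith
  rw [div_le_div_iff₀ h1u h1v]
  have h4s : (0:ℝ) < 4 * s := by linarith
  unfold maxs
  split_ifs with h1 h2 h2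
  · rcases le_abs.mp h1 with hu1 | hu1 <;> rcases le_abs.mp h2 with hv1 | hv1
    · rw [max_eq_right (by linarith), max_eq_right (by linarith)]
      nlinarith
    · linarith
    · rw [max_eq_left (by linarith), max_eq_right (by linarith)]
      nlinarith [mul_nonneg h1v.le (show (0:ℝ) ≤ -u by linarith)]
    · rw [max_eq_left (by linarith), max_eq_left (by linarith)]
      linarith
  · -- s ≤ |u|, |v| < s : u ≤ -s
    obtain ⟨hv1, hv2⟩ := abs_lt.mp (not_le.mp h2)
    have hu2 : u ≤ -s := by
      rcases le_abs.mp h1 with h | h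
      · linarith
      · linarith
    rw [max_eq_left (by linarith)]
    rw [show (1:ℝ) - (v + s)^2 / (4*s) = (4*s - (v+s)^2) / (4*s) by field_simp]
    rw [div_mul_eq_mul_div, le_div_iff₀ h4s]
    have e1 : (0:ℝ) ≤ 4*s - (v+s)^2 := by
      nlinarith [mul_pos (show (0:ℝ) < s - v by linarith) (show (0:ℝ) < 3*s + v by linarith),
        mul_nonneg hs.le (show (0:ℝ) ≤ 1 - s by linarith)]
    have e2 : (0:ℝ) ≤ 4*s - (1+s)*(v+s) := by
      nlinarith [mul_nonneg (show (0:ℝ) ≤ 1 + s by linarith) (show (0:ℝ) ≤ s - v by linarith),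
        mul_nonneg hs.le (show (0:ℝ) ≤ 1 - s by linarith)]
    nlinarith [mul_nonneg e1 (show (0:ℝ) ≤ -s - u by linarith),
      mul_nonneg (show (0:ℝ) ≤ v + s by linarith) e2]
  · -- |u| < s, s ≤ |v| : s ≤ v
    obtain ⟨hu1, hu2⟩ := abs_lt.mp (not_le.mp h1)
    have hv2 : s ≤ v := by
      rcases le_abs.mp h2 with h | h
      · exact h
      · linarith
    rw [max_eq_right (by linarith)]
    rw [show (1:ℝ) - (u + s)^2 / (4*s) = (4*s - (u+s)^2) / (4*s) by field_simp]
    rw [div_mul_eq_mul_div, div_le_iff₀ h4s]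
    nlinarith [mul_nonneg h1v.le (sq_nonneg (u - s))]
  · -- both inner
    obtain ⟨hu1, hu2⟩ := abs_lt.mp (not_le.mp h1)
    obtain ⟨hv1, hv2⟩ := abs_lt.mp (not_le.mp h2)
    rw [show (1:ℝ) - (u + s)^2 / (4*s) = (4*s - (u+s)^2) / (4*s) by field_simp,
        show (1:ℝ) - (v + s)^2 / (4*s) = (4*s - (v+s)^2) / (4*s) by field_simp]
    rw [div_mul_eq_mul_div, div_mul_eq_mul_div, div_le_div_iff₀ h4s h4s]
    have hprod : (0:ℝ) ≤ (1-u)*(1-v) - (1-s)*(1-s) := by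
      nlinarith [mul_nonneg (show (0:ℝ) ≤ s - u by linarith) (show (0:ℝ) ≤ 1 - v by linarith),
        mul_nonneg (show (0:ℝ) ≤ 1 - s by linarith) (show (0:ℝ) ≤ s - v by linarith)]
    nlinarith [mul_nonneg (mul_nonneg h4s.le (show (0:ℝ) ≤ v - u by linarith)) hprod]

lemma kfun_nonneg {s γ x : ℝ} (hs : 0 < s) (hs1 : s < 1) (hγ : 0 < γ) (hx : 0 ≤ x) :
    0 ≤ 1 - maxs s (1 - γ / x) := by
  have : 1 - γ / x ≤ 1 := by
    have : 0 ≤ γ / x := div_nonneg hγ.le hx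
    linarith
  linarith [maxs_le_one hs hs1 this]

lemma kfun_le_one {s γ x : ℝ} (hs : 0 < s) : 1 - maxs s (1 - γ / x) ≤ 1 := by
  linarith [maxs_nonneg hs (1 - γ / x)]

lemma phi_mono {s γ x y : ℝ} (hs : 0 < s) (hs1 : s < 1) (hγ : 0 < γ)
    (hx : 0 < x) (hxy : x ≤ y) :
    (1 - maxs s (1 - γ / x)) * x ≤ (1 - maxs s (1 - γ / y)) * y := by
  have hy : 0 < y := lt_of_lt_of_le hx hxy
  have e : ∀ z : ℝ, 0 < z →
      (1 - maxs s (1 - γ / z)) * z = γ * ((1 - maxs s (1 - γ / z)) / (1 - (1 - γ / z))) := by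
    intro z hz
    rw [show (1:ℝ) - (1 - γ / z) = γ / z by ring]
    rw [div_div_eq_mul_div]
    field_simp
  rw [e x hx, e y hy]
  refine mul_le_mul_of_nonneg_left ?_ hγ.le
  refine g_mono hs hs1 ?_ ?_
  · have : γ / y ≤ γ / x := div_le_div_of_nonneg_left hγ.le hx hxy
    linarith
  · have : 0 < γ / y := div_pos hγ hy
    linarith

lemma phi_lip {s γ x y : ℝ} (hs : 0 < s) (hs1 : s < 1) (hγ : 0 < γ)
    (hx : 0 ≤ x) (hy : 0 ≤ y) :
    ((1 - maxs s (1 - γ / x)) * x - (1 - maxs s (1 - γ / y)) * y)^2 ≤ (x - y)^2 := by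
  wlog h : x ≤ y generalizing x y
  · have h2 := this hy hx (le_of_not_ge h)
    nlinarith [h2]
  rcases eq_or_lt_of_le hx with h0 | h0
  · rw [← h0, mul_zero]
    have k1 := kfun_nonneg hs hs1 hγ hy
    have k2 := kfun_le_one (γ := γ) (x := y) hs
    nlinarith [mul_nonneg (mul_nonneg (mul_nonneg hy hy)
      (by linarith : (0:ℝ) ≤ 1 - (1 - maxs s (1 - γ / y))))
      (by linarith : (0:ℝ) ≤ 1 + (1 - maxs s (1 - γ / y)))]
  · have hy0 : 0 < y := lt_of_lt_of_le h0 h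
    have m1 := phi_mono hs hs1 hγ h0 h
    have m2 : maxs s (1 - γ / x) * x ≤ maxs s (1 - γ / y) * y := by
      refine mul_le_mul (maxs_mono hs hs1 ?_) h h0.le (maxs_nonneg hs _)
      have : γ / y ≤ γ / x := div_le_div_of_nonneg_left hγ.le h0 h
      linarith
    nlinarith [m1, m2, mul_nonneg (sub_nonneg.mpr m2) (sub_nonneg.mpr m1)]


lemma frob_eq_sum {d : ℕ} (A B : Matrix (Fin d) (Fin d) ℝ) (hB : B.IsSymm) :
    frob A B = ∑ i, ∑ j, A i j * B i j := by
  unfold frob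
  rw [Matrix.trace]
  simp only [Matrix.diag, Matrix.mul_apply]
  refine Finset.sum_congr rfl fun i _ => Finset.sum_congr rfl fun j _ => ?_
  rw [hB.apply]

lemma frob_self_nonneg {d : ℕ} {A : Matrix (Fin d) (Fin d) ℝ} (hA : A.IsSymm) :
    0 ≤ frob A A := by
  rw [frob_eq_sum A A hA]
  exact Finset.sum_nonneg fun i _ => Finset.sum_nonneg fun j _ => mul_self_nonneg _

lemma fnorm_sq {d : ℕ} {A : Matrix (Fin d) (Fin d) ℝ} (hA : A.IsSymm) :
    fnorm A ^ 2 = frob A A :=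
  Real.sq_sqrt (frob_self_nonneg hA)

lemma frob_le {d : ℕ} {A B : Matrix (Fin d) (Fin d) ℝ} (hA : A.IsSymm) (hB : B.IsSymm) :
    frob A B ≤ fnorm A * fnorm B := by
  have h1 : frob A B = ∑ p : Fin d × Fin d, A p.1 p.2 * B p.1 p.2 := by
    rw [frob_eq_sum A B hB]
    exact (Fintype.sum_prod_type (f := fun p : Fin d × Fin d => A p.1 p.2 * B p.1 p.2)).symm
  have hAA : frob A A = ∑ p : Fin d × Fin d, (A p.1 p.2)^2 := by
    rw [frob_eq_sum A A hA]
    rw [Fintype.sum_prod_type (f := fun p : Fin d × Fin d => (A p.1 p.2)^2)]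
    simp [sq]
  have hBB : frob B B = ∑ p : Fin d × Fin d, (B p.1 p.2)^2 := by
    rw [frob_eq_sum B B hB]
    rw [Fintype.sum_prod_type (f := fun p : Fin d × Fin d => (B p.1 p.2)^2)]
    simp [sq]
  have key := Finset.sum_mul_sq_le_sq_mul_sq Finset.univ
    (fun p : Fin d × Fin d => A p.1 p.2) (fun p : Fin d × Fin d => B p.1 p.2)
  have h2 : frob A B ≤ Real.sqrt ((frob A B)^2) := by
    rw [Real.sqrt_sq_eq_abs]; exact le_abs_self _
  refine h2.trans ?_
  unfold fnorm
  rw [← Real.sqrt_mul (frob_self_nonneg hA)]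
  apply Real.sqrt_le_sqrt
  rw [h1, hAA, hBB]
  exact key

lemma trace_dev {d : ℕ} (hd : 0 < d) (τ : Matrix (Fin d) (Fin d) ℝ) :
    Matrix.trace (dev τ) = 0 := by
  have hdne : (d:ℝ) ≠ 0 := Nat.cast_ne_zero.mpr hd.ne'
  simp [dev, Matrix.trace_sub, Matrix.trace_smul, Matrix.trace_one, smul_eq_mul]
  field_simp
  ring

lemma dev_isSymm {d : ℕ} {τ : Matrix (Fin d) (Fin d) ℝ} (hτ : τ.IsSymm) :
    (dev τ).IsSymm := by
  unfold Matrix.IsSymm dev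
  rw [Matrix.transpose_sub, Matrix.transpose_smul, Matrix.transpose_one, hτ]

lemma pyth {d : ℕ} (c : ℝ) (Y : Matrix (Fin d) (Fin d) ℝ) (hY : Matrix.trace Y = 0) :
    frob (c • 1 + Y) (c • 1 + Y) = c^2 * d + frob Y Y := by
  simp only [frob, Matrix.add_mul, Matrix.mul_add, Matrix.smul_mul, Matrix.mul_smul,
    Matrix.trace_add, Matrix.trace_smul, Matrix.one_mul, Matrix.mul_one, Matrix.trace_one,
    hY, smul_eq_mul, Fintype.card_fin]
  ring

lemma frob_sub_smul {d : ℕ} (x y : ℝ) (a b : Matrix (Fin d) (Fin d) ℝ) :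
    frob (x • a - y • b) (x • a - y • b)
      = x^2 * frob a a - 2*x*y*frob a b + y^2 * frob b b := by
  simp only [frob, Matrix.sub_mul, Matrix.mul_sub, Matrix.smul_mul, Matrix.mul_smul,
    Matrix.trace_sub, Matrix.trace_smul, smul_eq_mul, Matrix.trace_mul_comm b a]
  ring

lemma frob_sub_self {d : ℕ} (a b : Matrix (Fin d) (Fin d) ℝ) :
    frob (a - b) (a - b) = frob a a - 2*frob a b + frob b b := by
  have := frob_sub_smul 1 1 a b
  simpa using this

lemma Rs_eq {d : ℕ} (s γ : ℝ) (τ : Matrix (Fin d) (Fin d) ℝ) :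
    Rs s γ τ = (Matrix.trace τ / (d:ℝ)) • (1 : Matrix (Fin d) (Fin d) ℝ)
      + (1 - maxs s (1 - γ / fnorm (dev τ))) • dev τ := by
  unfold Rs
  split_ifs with h
  · rw [h, smul_zero, add_zero]
    have h2 : τ - (Matrix.trace τ / (d:ℝ)) • (1 : Matrix (Fin d) (Fin d) ℝ) = 0 := h
    exact sub_eq_zero.mp h2
  · set m := maxs s (1 - γ / fnorm (dev τ)) with hm
    rw [sub_smul, one_smul]
    unfold dev
    module

lemma core_ineq {d : ℕ} {a b : Matrix (Fin d) (Fin d) ℝ} (haS : a.IsSymm) (hbS : b.IsSymm)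
    {s γ : ℝ} (hs0 : 0 < s) (hs1 : s < 1) (hγ : 0 < γ) :
    frob ((1 - maxs s (1 - γ / fnorm a)) • a - (1 - maxs s (1 - γ / fnorm b)) • b)
         ((1 - maxs s (1 - γ / fnorm a)) • a - (1 - maxs s (1 - γ / fnorm b)) • b)
      ≤ frob (a - b) (a - b) := by
  set A := fnorm a with hA
  set B := fnorm b with hB
  set kA := 1 - maxs s (1 - γ / A) with hkA
  set kB := 1 - maxs s (1 - γ / B) with hkB
  have hA0 : 0 ≤ A := Real.sqrt_nonneg _
  have hB0 : 0 ≤ B := Real.sqrt_nonneg _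
  have hAA : frob a a = A^2 := (fnorm_sq haS).symm
  have hBB : frob b b = B^2 := (fnorm_sq hbS).symm
  have hC : frob a b ≤ A * B := frob_le haS hbS
  have hkA0 : 0 ≤ kA := kfun_nonneg hs0 hs1 hγ hA0
  have hkA1 : kA ≤ 1 := kfun_le_one hs0
  have hkB0 : 0 ≤ kB := kfun_nonneg hs0 hs1 hγ hB0
  have hkB1 : kB ≤ 1 := kfun_le_one hs0
  have hLip : (kA * A - kB * B)^2 ≤ (A - B)^2 := phi_lip hs0 hs1 hγ hA0 hB0
  rw [frob_sub_smul, frob_sub_self, hAA, hBB]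
  have h1 : (0:ℝ) ≤ 1 - kA * kB := by nlinarith
  have h2 : (0:ℝ) ≤ A * B - frob a b := by linarith
  nlinarith [mul_nonneg h1 h2, hLip]

/-- For every `s ∈ (0,1)` and `γ > 0`, the smoothed von Mises resolvent `R_s` is
Lipschitz continuous with constant 1 on the symmetric matrices. -/
theorem smoothed_resolvent_lipschitz
    (d : ℕ) (hd : 0 < d) (s : ℝ) (hs : s ∈ Set.Ioo (0 : ℝ) 1) (γ : ℝ) (hγ : 0 < γ)
    (σ τ : Matrix (Fin d) (Fin d) ℝ) (hσ : σ.IsSymm) (hτ : τ.IsSymm) :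
    fnorm (Rs s γ τ - Rs s γ σ) ≤ fnorm (τ - σ) := by
  obtain ⟨hs0, hs1⟩ := hs
  have haS : (dev τ).IsSymm := dev_isSymm hτ
  have hbS : (dev σ).IsSymm := dev_isSymm hσ
  have hta : Matrix.trace (dev τ) = 0 := trace_dev hd τ
  have htb : Matrix.trace (dev σ) = 0 := trace_dev hd σ
  set kA := 1 - maxs s (1 - γ / fnorm (dev τ)) with hkA
  set kB := 1 - maxs s (1 - γ / fnorm (dev σ)) with hkB
  set c := Matrix.trace τ / (d:ℝ) - Matrix.trace σ / (d:ℝ) with hc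
  have hD : Rs s γ τ - Rs s γ σ
      = c • (1 : Matrix (Fin d) (Fin d) ℝ) + (kA • dev τ - kB • dev σ) := by
    rw [Rs_eq s γ τ, Rs_eq s γ σ, hc]
    module
  have hTS : τ - σ = c • (1 : Matrix (Fin d) (Fin d) ℝ) + (dev τ - dev σ) := by
    rw [hc]
    unfold dev
    module
  have hY : Matrix.trace (kA • dev τ - kB • dev σ) = 0 := by
    rw [Matrix.trace_sub, Matrix.trace_smul, Matrix.trace_smul, hta, htb]
    simp
  have hab : Matrix.trace (dev τ - dev σ) = 0 := by
    rw [Matrix.trace_sub, hta, htb, sub_zero]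
  have e1 : frob (Rs s γ τ - Rs s γ σ) (Rs s γ τ - Rs s γ σ)
      = c^2 * d + frob (kA • dev τ - kB • dev σ) (kA • dev τ - kB • dev σ) := by
    rw [hD]; exact pyth c _ hY
  have e2 : frob (τ - σ) (τ - σ) = c^2 * d + frob (dev τ - dev σ) (dev τ - dev σ) := by
    rw [hTS]; exact pyth c _ hab
  have core := core_ineq haS hbS hs0 hs1 hγ (γ := γ)
  unfold fnorm
  apply Real.sqrt_le_sqrt
  rw [e1, e2]
  linarith [core]
end

section
/- Let s ∈ (0,1) and γ > 0. For every τ ∈ ℝ^{d×d}_s with τ^D ≠ 0 one has |max_s(1 − γ/|τ^D|) − max{0, 1 − γ/|τ^D|}| · |τ^D| ≤ γ·s/(4(1 − s)). Equivalently, the smoothed von Mises resolvent R_s satisfies |R_s(τ) − π_K(τ)| ≤ γ·s/(4(1 − s)) for all τ ∈ ℝ^{d×d}_s, where π_K(τ) := τ − max{0, 1 − γ/|τ^D|}·τ^D (with π_K(τ) := τ when τ^D = 0). -/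
open scoped Classical

/-- The projection `π_K` onto the von Mises admissible set
`K = {σ symmetric : |σ^D| ≤ γ}`. -/
noncomputable def projK {d : ℕ} (γ : ℝ) (τ : Matrix (Fin d) (Fin d) ℝ) :
    Matrix (Fin d) (Fin d) ℝ :=
  if dev τ = 0 then τ else τ - max 0 (1 - γ / fnorm (dev τ)) • dev τ

lemma fnorm_smul {d : ℕ} (c : ℝ) (A : Matrix (Fin d) (Fin d) ℝ) :
    fnorm (c • A) = |c| * fnorm A := by
  unfold fnorm frob
  rw [Matrix.smul_mul, Matrix.mul_smul, smul_smul, Matrix.trace_smul, smul_eq_mul,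
    Real.sqrt_mul (mul_self_nonneg c), Real.sqrt_mul_self_eq_abs]

lemma maxs_sub_max_abs_le {s r : ℝ} (hs0 : 0 < s) (h : |r| < s) :
    |maxs s r - max 0 r| ≤ s / 4 := by
  rw [maxs, if_neg (not_le.mpr h)]
  rcases abs_lt.mp h with ⟨h1, h2⟩
  have h4s : (4 : ℝ) * s ≠ 0 := by positivity
  have hq : (r + s) ^ 2 / (4 * s) * (4 * s) = (r + s) ^ 2 := div_mul_cancel₀ _ h4s
  rcases le_or_gt 0 r with hr | hr
  · rw [max_eq_right hr, abs_le]
    constructor <;> nlinarith [sq_nonneg (r - s), sq_nonneg (r + s)]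
  · rw [max_eq_left hr.le, sub_zero, abs_le]
    constructor <;> nlinarith [sq_nonneg (r + s), sq_nonneg r]

/-- Let `s ∈ (0,1)` and `γ > 0`.  For every symmetric `τ` with `τ^D ≠ 0` one has
`|max_s(1 - γ/|τ^D|) - max{0, 1 - γ/|τ^D|}| · |τ^D| ≤ γ s / (4 (1 - s))`;
equivalently, the smoothed von Mises resolvent satisfies
`|R_s(τ) - π_K(τ)| ≤ γ s / (4 (1 - s))` for all symmetric `τ`. -/
theorem smoothed_resolvent_close_to_projection
    (d : ℕ) (hd : 0 < d) (s : ℝ) (hs : s ∈ Set.Ioo (0 : ℝ) 1) (γ : ℝ) (hγ : 0 < γ) :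
    (∀ τ : Matrix (Fin d) (Fin d) ℝ, τ.IsSymm → dev τ ≠ 0 →
      |maxs s (1 - γ / fnorm (dev τ)) - max 0 (1 - γ / fnorm (dev τ))| * fnorm (dev τ)
        ≤ γ * s / (4 * (1 - s))) ∧
    (∀ τ : Matrix (Fin d) (Fin d) ℝ, τ.IsSymm →
      fnorm (Rs s γ τ - projK γ τ) ≤ γ * s / (4 * (1 - s))) := by
  obtain ⟨hs0, hs1⟩ := hs
  have h1s : (0 : ℝ) < 1 - s := by linarith
  have hRHS : 0 ≤ γ * s / (4 * (1 - s)) := by positivity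
  have key : ∀ ρ : ℝ, 0 ≤ ρ →
      |maxs s (1 - γ / ρ) - max 0 (1 - γ / ρ)| * ρ ≤ γ * s / (4 * (1 - s)) := by
    intro ρ hρ
    set r := 1 - γ / ρ with hr
    by_cases hcase : s ≤ |r|
    · rw [maxs, if_pos hcase, sub_self, abs_zero, zero_mul]; exact hRHS
    · push_neg at hcase
      have hρ0 : 0 < ρ := by
        rcases hρ.lt_or_eq with h | h
        · exact h
        · exfalso
          have hc2 : |1 - γ / ρ| < s := hcase
          rw [← h, div_zero, sub_zero, abs_one] at hc2
          linarith
      have hrs : γ / ρ > 1 - s := by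
        have : r < s := (abs_lt.mp hcase).2
        simp only [hr] at this; linarith
      have hρle : ρ ≤ γ / (1 - s) := by
        rw [le_div_iff₀ h1s]
        rw [gt_iff_lt, lt_div_iff₀ hρ0] at hrs
        nlinarith
      calc |maxs s r - max 0 r| * ρ ≤ (s / 4) * (γ / (1 - s)) :=
            mul_le_mul (maxs_sub_max_abs_le hs0 hcase) hρle hρ (by positivity)
        _ = γ * s / (4 * (1 - s)) := by field_simp
  have hρnn : ∀ τ : Matrix (Fin d) (Fin d) ℝ, 0 ≤ fnorm (dev τ) :=
    fun τ => Real.sqrt_nonneg _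
  refine ⟨fun τ _ _ => key _ (hρnn τ), fun τ _ => ?_⟩
  by_cases hdev : dev τ = 0
  · rw [Rs, projK, if_pos hdev, if_pos hdev, sub_self]
    have : fnorm (0 : Matrix (Fin d) (Fin d) ℝ) = 0 := by
      simp [fnorm, frob]
    rw [this]; exact hRHS
  · rw [Rs, projK, if_neg hdev, if_neg hdev]
    have : (τ - maxs s (1 - γ / fnorm (dev τ)) • dev τ) -
        (τ - max 0 (1 - γ / fnorm (dev τ)) • dev τ) =
        (max 0 (1 - γ / fnorm (dev τ)) - maxs s (1 - γ / fnorm (dev τ))) • dev τ := by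
      rw [sub_smul]; abel
    rw [this, fnorm_smul, abs_sub_comm]
    exact key _ (hρnn τ)
end

section
/- Let s ∈ (0,1) and γ > 0. At every τ ∈ ℝ^{d×d}_s with τ^D ≠ 0, the smoothed von Mises resolvent R_s is Fréchet differentiable with derivative R_s'(τ)h = h − max_s'(1 − γ/|τ^D|)·(γ/|τ^D|³)·(τ^D : h^D)·τ^D − max_s(1 − γ/|τ^D|)·h^D for all h ∈ ℝ^{d×d}_s. -/
open scoped Classical

/-- The derivative of the smoothed max function. -/
noncomputable def maxs' (s r : ℝ) : ℝ :=
  if r ≤ -s then 0 else if r < s then (r + s) / (2 * s) else 1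

attribute [local instance] Matrix.frobeniusSeminormedAddCommGroup
  Matrix.frobeniusNormedAddCommGroup Matrix.frobeniusIsBoundedSMul
  Matrix.frobeniusNormedSpace


section aux

lemma sq_max_hasDerivAt (x : ℝ) : HasDerivAt (fun y => max 0 y ^ 2) (2 * max 0 x) x := by
  rcases lt_trichotomy x 0 with h | h | h
  · rw [max_eq_left h.le, mul_zero]
    have he : (fun y : ℝ => max 0 y ^ 2) =ᶠ[nhds x] fun _ => (0:ℝ) := by
      filter_upwards [Iio_mem_nhds h] with y (hy : y < 0)
      simp [max_eq_left hy.le]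
    exact (hasDerivAt_const x (0:ℝ)).congr_of_eventuallyEq he
  · subst h
    rw [max_self, mul_zero]
    rw [hasDerivAt_iff_isLittleO]
    have hbig : (fun y : ℝ => max 0 y ^ 2) =O[nhds (0:ℝ)] fun y => y * y := by
      apply Asymptotics.IsBigO.of_bound 1
      filter_upwards with y
      have : |max 0 y| ≤ |y| := by
        rcases le_total y 0 with h | h
        · simp [max_eq_left h]
        · simp [max_eq_right h, abs_of_nonneg h]
      calc ‖max 0 y ^ 2‖ = |max 0 y| * |max 0 y| := by
            rw [sq]; simp [abs_mul]
        _ ≤ |y| * |y| := by gcongr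
        _ = 1 * ‖y * y‖ := by simp [abs_mul]
    have h2 : (fun y : ℝ => y * y) =o[nhds (0:ℝ)] fun y => y := by
      rw [Asymptotics.isLittleO_iff]
      intro c hc
      filter_upwards [Metric.ball_mem_nhds (0:ℝ) hc] with y hy
      have : |y| < c := by simpa [Real.dist_eq] using hy
      calc ‖y * y‖ = |y| * |y| := by simp [abs_mul]
        _ ≤ c * |y| := by gcongr
        _ = c * ‖y‖ := rfl
    simpa using hbig.trans_isLittleO h2
  · rw [max_eq_right h.le]
    have he : (fun y : ℝ => max 0 y ^ 2) =ᶠ[nhds x] fun y => y ^ 2 := by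
      filter_upwards [Ioi_mem_nhds h] with y (hy : 0 < y)
      simp [max_eq_right hy.le]
    have : HasDerivAt (fun y : ℝ => y ^ 2) (2 * x) x := by
      simpa using (hasDerivAt_pow 2 x)
    exact this.congr_of_eventuallyEq he

lemma maxs_eq (s : ℝ) (hs : 0 < s) (r : ℝ) :
    maxs s r = (max 0 (r + s) ^ 2 - max 0 (r - s) ^ 2) / (4 * s) := by
  unfold maxs
  rcases le_or_gt s |r| with h | h
  · rw [if_pos h]
    rcases abs_cases r with ⟨he, hr⟩ | ⟨he, hr⟩
    · rw [he] at h
      rw [max_eq_right (by linarith : (0:ℝ) ≤ r), max_eq_right (by linarith : (0:ℝ) ≤ r + s),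
        max_eq_right (by linarith : (0:ℝ) ≤ r - s)]
      field_simp
      ring
    · rw [he] at h
      rw [max_eq_left (by linarith : r ≤ 0), max_eq_left (by linarith : r + s ≤ 0),
        max_eq_left (by linarith : r - s ≤ 0)]
      simp
  · rw [if_neg (not_le.mpr h)]
    rcases abs_lt.mp h with ⟨h1, h2⟩
    rw [max_eq_right (by linarith : (0:ℝ) ≤ r + s), max_eq_left (by linarith : r - s ≤ 0)]
    ring_nf

lemma maxs'_eq (s : ℝ) (hs : 0 < s) (r : ℝ) :
    maxs' s r = (max 0 (r + s) - max 0 (r - s)) / (2 * s) := by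
  unfold maxs'
  rcases le_or_gt r (-s) with h | h
  · rw [if_pos h, max_eq_left (by linarith : r + s ≤ 0), max_eq_left (by linarith : r - s ≤ 0)]
    simp
  · rw [if_neg (not_le.mpr h)]
    rcases lt_or_ge r s with h2 | h2
    · rw [if_pos h2, max_eq_right (by linarith : (0:ℝ) ≤ r + s),
        max_eq_left (by linarith : r - s ≤ 0)]
      ring
    · rw [if_neg (not_lt.mpr h2), max_eq_right (by linarith : (0:ℝ) ≤ r + s),
        max_eq_right (by linarith : (0:ℝ) ≤ r - s)]
      field_simp
      ring

lemma maxs_hasDerivAt (s : ℝ) (hs : 0 < s) (r : ℝ) :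
    HasDerivAt (maxs s) (maxs' s r) r := by
  have h1 : HasDerivAt (fun y : ℝ => max 0 (y + s) ^ 2) (2 * max 0 (r + s)) r := by
    simpa [Function.comp_def] using (sq_max_hasDerivAt (r + s)).comp r ((hasDerivAt_id r).add_const s)
  have h2 : HasDerivAt (fun y : ℝ => max 0 (y - s) ^ 2) (2 * max 0 (r - s)) r := by
    simpa [Function.comp_def] using (sq_max_hasDerivAt (r - s)).comp r ((hasDerivAt_id r).sub_const s)
  have hd := (h1.sub h2).div_const (4 * s)
  have heq : (fun y => (max 0 (y + s) ^ 2 - max 0 (y - s) ^ 2) / (4 * s)) = maxs s := by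
    funext y; rw [maxs_eq s hs y]
  simp only [Pi.sub_apply] at hd
  rw [heq] at hd
  refine hd.congr_deriv ?_
  rw [maxs'_eq s hs r]
  field_simp
  ring

variable {d : ℕ}

lemma dev_add (A B : Matrix (Fin d) (Fin d) ℝ) : dev (A + B) = dev A + dev B := by
  simp [dev, add_div, add_smul]; abel

lemma dev_smul (c : ℝ) (A : Matrix (Fin d) (Fin d) ℝ) : dev (c • A) = c • dev A := by
  unfold dev
  rw [smul_sub, Matrix.trace_smul, smul_eq_mul, mul_div_assoc, ← smul_smul]

lemma frob_add_right (A B C : Matrix (Fin d) (Fin d) ℝ) :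
    frob A (B + C) = frob A B + frob A C := by
  simp [frob, Matrix.mul_add]

lemma frob_smul_right (c : ℝ) (A B : Matrix (Fin d) (Fin d) ℝ) :
    frob A (c • B) = c * frob A B := by
  simp [frob, Matrix.mul_smul]

lemma frob_comm (A B : Matrix (Fin d) (Fin d) ℝ) : frob A B = frob B A := by
  unfold frob
  rw [Matrix.trace_mul_comm]

/-- The deviator as a continuous linear map. -/
noncomputable def devCLM (d : ℕ) :
    Matrix (Fin d) (Fin d) ℝ →L[ℝ] Matrix (Fin d) (Fin d) ℝ :=
  LinearMap.toContinuousLinearMap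
    { toFun := dev
      map_add' := dev_add
      map_smul' := dev_smul }

@[simp] lemma devCLM_apply (A : Matrix (Fin d) (Fin d) ℝ) : devCLM d A = dev A := rfl

lemma hasFDerivAt_dev (A : Matrix (Fin d) (Fin d) ℝ) :
    HasFDerivAt dev (devCLM d) A := (devCLM d).hasFDerivAt

/-- The Frobenius inner product as a continuous bilinear map. -/
noncomputable def frobCLM (d : ℕ) :
    Matrix (Fin d) (Fin d) ℝ →L[ℝ] Matrix (Fin d) (Fin d) ℝ →L[ℝ] ℝ :=
  LinearMap.toContinuousLinearMap
    { toFun := fun X => LinearMap.toContinuousLinearMap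
        { toFun := fun Y => frob X Y
          map_add' := fun Y Z => by simp [frob, Matrix.mul_add]
          map_smul' := fun c Y => by simp [frob, Matrix.mul_smul]
          : Matrix (Fin d) (Fin d) ℝ →ₗ[ℝ] ℝ }
      map_add' := fun X Z => by
        ext Y
        simp [frob, Matrix.add_mul]
      map_smul' := fun c X => by
        ext Y
        simp [frob, Matrix.smul_mul] }

@[simp] lemma frobCLM_apply (X Y : Matrix (Fin d) (Fin d) ℝ) : frobCLM d X Y = frob X Y := rfl

lemma frob_dev_linear (B : Matrix (Fin d) (Fin d) ℝ) (c m : ℝ) :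
    ∃ L : Matrix (Fin d) (Fin d) ℝ →L[ℝ] Matrix (Fin d) (Fin d) ℝ,
      ∀ h, L h = h - (c * frob B (dev h)) • B - m • dev h := by
  refine ⟨LinearMap.toContinuousLinearMap
    { toFun := fun h => h - (c * frob B (dev h)) • B - m • dev h
      map_add' := by
        intro x y
        simp only [dev_add, frob_add_right, mul_add, add_smul, smul_add]
        abel
      map_smul' := by
        intro t x
        simp only [dev_smul, frob_smul_right, RingHom.id_apply, smul_sub, smul_smul]
        rw [mul_left_comm c t, mul_comm m t] }, fun h => rfl⟩

end aux
/-- Let `s ∈ (0,1)` and `γ > 0`.  At every symmetric `τ` with `τ^D ≠ 0`, the smoothed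
von Mises resolvent `R_s` is Fréchet differentiable (as a map on the subspace of
symmetric matrices) with derivative
`h ↦ h - max_s'(1-γ/|τ^D|)·(γ/|τ^D|³)·(τ^D : h^D)·τ^D - max_s(1-γ/|τ^D|)·h^D`. -/
theorem smoothed_resolvent_frechet_differentiable
    (d : ℕ) (hd : 0 < d) (s : ℝ) (hs : s ∈ Set.Ioo (0 : ℝ) 1) (γ : ℝ) (hγ : 0 < γ)
    (τ : Matrix (Fin d) (Fin d) ℝ) (hτ : τ.IsSymm) (hdev : dev τ ≠ 0) :
    ∃ L : Matrix (Fin d) (Fin d) ℝ →L[ℝ] Matrix (Fin d) (Fin d) ℝ,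
      (∀ h : Matrix (Fin d) (Fin d) ℝ, h.IsSymm →
        L h = h - (maxs' s (1 - γ / fnorm (dev τ)) * (γ / fnorm (dev τ) ^ 3)
                    * frob (dev τ) (dev h)) • dev τ
                - maxs s (1 - γ / fnorm (dev τ)) • dev h) ∧
      HasFDerivWithinAt (Rs s γ) L {A : Matrix (Fin d) (Fin d) ℝ | A.IsSymm} τ := by
  obtain ⟨hs0, hs1⟩ := hs
  set B := dev τ with hBdef
  have hBsymm : B.IsSymm := by
    unfold Matrix.IsSymm at *
    simp [hBdef, dev, Matrix.transpose_sub, Matrix.transpose_smul, hτ]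
  have hgB : frob B B = ∑ i, ∑ j, B i j ^ 2 := by
    unfold frob
    rw [Matrix.trace]
    simp only [Matrix.diag, Matrix.mul_apply]
    refine Finset.sum_congr rfl fun i _ => Finset.sum_congr rfl fun j _ => ?_
    rw [sq, hBsymm.apply i j]
  have hgpos : 0 < frob B B := by
    rw [hgB]
    have hex : ∃ i j, B i j ≠ 0 := by
      by_contra hc
      push_neg at hc
      exact hdev (by ext i j; exact hc i j)
    obtain ⟨i, j, hij⟩ := hex
    have h1 : 0 < ∑ j', B i j' ^ 2 :=
      Finset.sum_pos' (fun _ _ => sq_nonneg _) ⟨j, Finset.mem_univ j, by positivity⟩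
    exact Finset.sum_pos' (fun k _ => Finset.sum_nonneg fun l _ => sq_nonneg _)
      ⟨i, Finset.mem_univ i, h1⟩
  set n : ℝ := fnorm B with hndef
  have hnsq : n = Real.sqrt (frob B B) := rfl
  have hnpos : 0 < n := Real.sqrt_pos.mpr hgpos
  have hnne : n ≠ 0 := ne_of_gt hnpos
  set u : ℝ := 1 - γ / n with hudef
  obtain ⟨L, hL⟩ := frob_dev_linear B (maxs' s u * (γ / n ^ 3)) (maxs s u)
  refine ⟨L, fun h _ => hL h, ?_⟩
  -- the derivative chain
  have hdevF : ∀ A, HasFDerivAt dev (devCLM d) A := hasFDerivAt_dev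
  have hgF : HasFDerivAt (fun A : Matrix (Fin d) (Fin d) ℝ => frob (dev A) (dev A))
      ((frobCLM d).precompR _ B (devCLM d) + (frobCLM d).precompL _ (devCLM d) B) τ := by
    exact (frobCLM d).hasFDerivAt_of_bilinear (hdevF τ) (hdevF τ)
  have hnF : HasFDerivAt (fun A : Matrix (Fin d) (Fin d) ℝ => fnorm (dev A))
      ((1 / (2 * n)) •
        ((frobCLM d).precompR _ B (devCLM d) + (frobCLM d).precompL _ (devCLM d) B)) τ := by
    rw [hnsq]
    exact (Real.hasDerivAt_sqrt (ne_of_gt hgpos)).comp_hasFDerivAt τ hgF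
  have hinner : HasDerivAt (fun t : ℝ => 1 - γ / t) (γ * (n ^ 2)⁻¹) n := by
    have := ((hasDerivAt_inv hnne).const_mul γ).const_sub 1
    simpa [div_eq_mul_inv] using this
  have hφ : HasDerivAt (fun t : ℝ => maxs s (1 - γ / t)) (maxs' s u * (γ * (n ^ 2)⁻¹)) n := by
    have := (maxs_hasDerivAt s hs0 u).comp n hinner
    simpa [hudef, Function.comp_def] using this
  have hmF : HasFDerivAt (fun A : Matrix (Fin d) (Fin d) ℝ => maxs s (1 - γ / fnorm (dev A)))
      ((maxs' s u * (γ * (n ^ 2)⁻¹)) • ((1 / (2 * n)) •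
        ((frobCLM d).precompR _ B (devCLM d) + (frobCLM d).precompL _ (devCLM d) B))) τ := by
    exact hφ.comp_hasFDerivAt τ hnF
  have hFd : HasFDerivAt
      (fun A : Matrix (Fin d) (Fin d) ℝ => A - maxs s (1 - γ / fnorm (dev A)) • dev A)
      (ContinuousLinearMap.id ℝ (Matrix (Fin d) (Fin d) ℝ) -
        (maxs s u • devCLM d +
          (show Matrix (Fin d) (Fin d) ℝ →L[ℝ] Matrix (Fin d) (Fin d) ℝ from ((maxs' s u * (γ * (n ^ 2)⁻¹)) • ((1 / (2 * n)) •
            ((frobCLM d).precompR _ B (devCLM d) +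
              (frobCLM d).precompL _ (devCLM d) B))).smulRight B))) τ :=
    (hasFDerivAt_id τ).sub (hmF.smul (hdevF τ))
  have hDL : (ContinuousLinearMap.id ℝ (Matrix (Fin d) (Fin d) ℝ) -
        (maxs s u • devCLM d +
          (show Matrix (Fin d) (Fin d) ℝ →L[ℝ] Matrix (Fin d) (Fin d) ℝ from ((maxs' s u * (γ * (n ^ 2)⁻¹)) • ((1 / (2 * n)) •
            ((frobCLM d).precompR _ B (devCLM d) +
              (frobCLM d).precompL _ (devCLM d) B))).smulRight B))) = L := by
    refine ContinuousLinearMap.ext fun h => ?_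
    rw [hL h]
    change h - (maxs s u • dev h + ((maxs' s u * (γ * (n ^ 2)⁻¹)) * ((1 / (2 * n)) * (frob B (dev h) + frob (dev h) B))) • B) = _
    simp only [ContinuousLinearMap.sub_apply, ContinuousLinearMap.add_apply,
      ContinuousLinearMap.id_apply, ContinuousLinearMap.smul_apply,
      ContinuousLinearMap.smulRight_apply, ContinuousLinearMap.coe_smul', Pi.smul_apply,
      ContinuousLinearMap.precompR_apply, ContinuousLinearMap.precompL_apply,
      ContinuousLinearMap.compL_apply, ContinuousLinearMap.comp_apply,
      frobCLM_apply, devCLM_apply, smul_eq_mul, frob_comm (dev h) B]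
    have hsc : maxs' s u * (γ * (n ^ 2)⁻¹) * (1 / (2 * n) * (frob B (dev h) + frob B (dev h)))
        = maxs' s u * (γ / n ^ 3) * frob B (dev h) := by
      field_simp
      ring
    rw [hsc]
    module
  rw [hDL] at hFd
  -- `Rs` agrees with this function near `τ`
  have hev : Rs s γ =ᶠ[nhds τ]
      fun A : Matrix (Fin d) (Fin d) ℝ => A - maxs s (1 - γ / fnorm (dev A)) • dev A := by
    have hopen : IsOpen {A : Matrix (Fin d) (Fin d) ℝ | dev A ≠ 0} := by
      have : Continuous (dev : Matrix (Fin d) (Fin d) ℝ → Matrix (Fin d) (Fin d) ℝ) :=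
        (devCLM d).continuous
      exact isOpen_compl_singleton.preimage this
    filter_upwards [hopen.mem_nhds hdev] with A (hA : dev A ≠ 0)
    simp [Rs, hA]
  exact ((hFd.congr_of_eventuallyEq hev).hasFDerivWithinAt)
end

section
/- Let 𝔻 and 𝔼 be linear maps on ℝ^{d×d}_s with 𝔻 symmetric and coercive with constant γ_𝔻 > 0, and let R₀ : ℝ^{d×d}_s → ℝ^{d×d}_s be monotone and Lipschitz continuous with constant L. Define b(σ, τ) := 𝔻τ + 𝔼 R₀(𝔼*τ + σ), where 𝔼* is the adjoint of 𝔼. Then for all σ, σ̄, τ, τ̄ ∈ ℝ^{d×d}_s: (b(σ,τ) − b(σ̄,τ̄)) : (τ − τ̄) ≥ γ_𝔻|τ − τ̄|² − L|σ − σ̄|² − L‖𝔼‖·|τ − τ̄|·|σ − σ̄|, where ‖𝔼‖ is the operator norm of 𝔼. -/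
def SymMat (d : ℕ) : Submodule ℝ (Matrix (Fin d) (Fin d) ℝ) where
  carrier := {A | A.IsSymm}
  add_mem' := fun ha hb => ha.add hb
  zero_mem' := Matrix.isSymm_zero
  smul_mem' := fun c _ hA => hA.smul c

noncomputable def frobE {d : ℕ} (x y : SymMat d) : ℝ :=
  Matrix.trace ((x : Matrix (Fin d) (Fin d) ℝ) * (y : Matrix (Fin d) (Fin d) ℝ))

noncomputable def fnormE {d : ℕ} (x : SymMat d) : ℝ :=
  Real.sqrt (frobE x x)

noncomputable def phiE {d : ℕ} (x : SymMat d) : EuclideanSpace ℝ (Fin d × Fin d) :=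
  WithLp.toLp 2 (fun p : Fin d × Fin d => (x : Matrix (Fin d) (Fin d) ℝ) p.1 p.2)

lemma frobE_eq_inner {d : ℕ} (x y : SymMat d) : frobE x y = inner ℝ (phiE x) (phiE y) := by
  have hy : (y : Matrix (Fin d) (Fin d) ℝ).IsSymm := y.2
  simp only [frobE, Matrix.trace, Matrix.diag, Matrix.mul_apply, PiLp.inner_apply,
    RCLike.inner_apply, conj_trivial, phiE, Fintype.sum_prod_type, PiLp.toLp_apply]
  refine Finset.sum_congr rfl fun i _ => Finset.sum_congr rfl fun j _ => ?_
  rw [hy.apply j i, mul_comm]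

lemma phiE_sub {d : ℕ} (x y : SymMat d) : phiE (x - y) = phiE x - phiE y := by
  ext p; simp [phiE]

lemma phiE_add {d : ℕ} (x y : SymMat d) : phiE (x + y) = phiE x + phiE y := by
  ext p; simp [phiE]

lemma fnormE_eq_norm {d : ℕ} (x : SymMat d) : fnormE x = ‖phiE x‖ := by
  rw [fnormE, frobE_eq_inner, real_inner_self_eq_norm_sq]
  exact Real.sqrt_sq (norm_nonneg _)

lemma fnormE_nonneg {d : ℕ} (x : SymMat d) : 0 ≤ fnormE x := Real.sqrt_nonneg _

lemma sq_fnormE {d : ℕ} (x : SymMat d) : fnormE x ^ 2 = frobE x x := by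
  rw [fnormE_eq_norm, frobE_eq_inner, real_inner_self_eq_norm_sq]

lemma frobE_add_left {d : ℕ} (x y z : SymMat d) :
    frobE (x + y) z = frobE x z + frobE y z := by
  simp only [frobE_eq_inner, phiE_add, inner_add_left]

lemma frobE_sub_right {d : ℕ} (x y z : SymMat d) :
    frobE x (y - z) = frobE x y - frobE x z := by
  simp only [frobE_eq_inner, phiE_sub, inner_sub_right]

lemma frobE_le {d : ℕ} (x y : SymMat d) : frobE x y ≤ fnormE x * fnormE y := by
  rw [frobE_eq_inner, fnormE_eq_norm, fnormE_eq_norm]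
  exact real_inner_le_norm _ _

lemma fnormE_add_le {d : ℕ} (x y : SymMat d) :
    fnormE (x + y) ≤ fnormE x + fnormE y := by
  simp only [fnormE_eq_norm, phiE_add]
  exact norm_add_le _ _

lemma exists_unit {d : ℕ} (hd : 0 < d) : ∃ v : SymMat d, fnormE v = 1 := by
  classical
  set i0 : Fin d := ⟨0, hd⟩
  set M : Matrix (Fin d) (Fin d) ℝ := fun i j => if i = i0 ∧ j = i0 then 1 else 0
  have hM : M.IsSymm := by
    unfold Matrix.IsSymm
    funext i j
    simp only [Matrix.transpose, Matrix.of_apply, M]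
    by_cases h : i = i0 <;> by_cases h' : j = i0 <;> simp [h, h']
  refine ⟨⟨M, hM⟩, ?_⟩
  rw [fnormE_eq_norm, EuclideanSpace.norm_eq]
  have : ∑ p : Fin d × Fin d, ‖phiE (⟨M, hM⟩ : SymMat d) p‖ ^ 2 = 1 := by
    rw [Fintype.sum_prod_type]
    simp only [phiE, M]
    rw [Finset.sum_eq_single i0]
    · rw [Finset.sum_eq_single i0] <;> simp +contextual
    · intro b _ hb
      apply Finset.sum_eq_zero
      simp [hb]
    · simp
  rw [this, Real.sqrt_one]

/-- Let `𝔻` be symmetric and coercive with constant `γ_𝔻 > 0`, let `𝔼` be linear with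
adjoint `𝔼*` and operator norm bounded by `nE`, and let `R₀` be monotone and Lipschitz
with constant `L`.  Then `b(σ,τ) := 𝔻τ + 𝔼R₀(𝔼*τ + σ)` satisfies
`(b(σ,τ) - b(σ̄,τ̄)) : (τ - τ̄) ≥ γ_𝔻|τ-τ̄|² - L|σ-σ̄|² - L‖𝔼‖·|τ-τ̄|·|σ-σ̄|`. -/
theorem b_coercivity_estimate
    (d : ℕ) (hd : 0 < d)
    (D E Estar : SymMat d →ₗ[ℝ] SymMat d)
    (hDsymm : ∀ σ τ : SymMat d, frobE (D σ) τ = frobE σ (D τ))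
    (γD : ℝ) (hγD : 0 < γD)
    (hDcoer : ∀ σ : SymMat d, γD * fnormE σ ^ 2 ≤ frobE (D σ) σ)
    (hadj : ∀ σ τ : SymMat d, frobE (E σ) τ = frobE σ (Estar τ))
    (R0 : SymMat d → SymMat d) (L : ℝ)
    (hmono : ∀ a₁ a₂ : SymMat d, 0 ≤ frobE (R0 a₁ - R0 a₂) (a₁ - a₂))
    (hlip : ∀ a₁ a₂ : SymMat d, fnormE (R0 a₁ - R0 a₂) ≤ L * fnormE (a₁ - a₂))
    (nE : ℝ) (hnE : ∀ v : SymMat d, fnormE (E v) ≤ nE * fnormE v) :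
    ∀ σ σ' τ τ' : SymMat d,
      γD * fnormE (τ - τ') ^ 2 - L * fnormE (σ - σ') ^ 2
          - L * nE * fnormE (τ - τ') * fnormE (σ - σ')
        ≤ frobE ((D τ + E (R0 (Estar τ + σ))) - (D τ' + E (R0 (Estar τ' + σ'))))
            (τ - τ') := by
  obtain ⟨v1, hv1⟩ := exists_unit hd
  have hnE0 : 0 ≤ nE := by
    have := hnE v1
    rw [hv1, mul_one] at this
    exact le_trans (fnormE_nonneg _) this
  have hL0 : 0 ≤ L := by
    have := hlip v1 0
    rw [sub_zero, hv1, mul_one] at this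
    exact le_trans (fnormE_nonneg _) this
  -- adjoint bound
  have hEstar : ∀ v : SymMat d, fnormE (Estar v) ≤ nE * fnormE v := by
    intro v
    have h1 : fnormE (Estar v) ^ 2 ≤ (nE * fnormE v) * fnormE (Estar v) := by
      rw [sq_fnormE, ← hadj]
      calc frobE (E (Estar v)) v ≤ fnormE (E (Estar v)) * fnormE v := frobE_le _ _
        _ ≤ (nE * fnormE (Estar v)) * fnormE v :=
            mul_le_mul_of_nonneg_right (hnE _) (fnormE_nonneg _)
        _ = (nE * fnormE v) * fnormE (Estar v) := by ring
    rcases eq_or_lt_of_le (fnormE_nonneg (Estar v)) with h | h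
    · rw [← h]; exact mul_nonneg hnE0 (fnormE_nonneg v)
    · nlinarith
  intro σ σ' τ τ'
  set t := τ - τ' with ht
  set s := σ - σ' with hs
  set a := Estar τ + σ with ha
  set a' := Estar τ' + σ' with ha'
  set r := R0 a - R0 a' with hr
  have hdiff : (D τ + E (R0 a)) - (D τ' + E (R0 a')) = D t + E r := by
    rw [ht, hr, map_sub, map_sub]
    abel
  have haa : a - a' = Estar t + s := by
    rw [ha, ha', ht, hs, map_sub]
    abel
  rw [hdiff, frobE_add_left]
  have h1 : γD * fnormE t ^ 2 ≤ frobE (D t) t := hDcoer t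
  have h2 : frobE (E r) t = frobE r (a - a') - frobE r s := by
    rw [hadj, ← frobE_sub_right]
    congr 1
    rw [haa]; abel
  have h3 : 0 ≤ frobE r (a - a') := hmono a a'
  have h4 : fnormE (a - a') ≤ nE * fnormE t + fnormE s := by
    rw [haa]
    exact le_trans (fnormE_add_le _ _) (add_le_add_left (hEstar t) _)
  have h5 : frobE r s ≤ L * nE * fnormE t * fnormE s + L * fnormE s ^ 2 := by
    calc frobE r s ≤ fnormE r * fnormE s := frobE_le _ _
      _ ≤ (L * fnormE (a - a')) * fnormE s :=
          mul_le_mul_of_nonneg_right (hlip a a') (fnormE_nonneg _)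
      _ ≤ (L * (nE * fnormE t + fnormE s)) * fnormE s := by
          apply mul_le_mul_of_nonneg_right _ (fnormE_nonneg _)
          exact mul_le_mul_of_nonneg_left h4 hL0
      _ = L * nE * fnormE t * fnormE s + L * fnormE s ^ 2 := by ring
  rw [h2]
  linarith
end
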